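/- Let p : {-1,1}^n → ℝ be a polynomial. Then there is a univariate polynomial q of degree at most deg(p) such that for every t ∈ {0,1,...,n}, q(t) equals the average of p over all inputs x ∈ {-1,1}^n of Hamming weight t, i.e. q(t) = C(n,t)^{-1} · ∑_{|x|=t} p(x). -/

import Mathlib

open Finset Polynomial

-- cast of descFactorial as real product
lemma MP.cast_descFact (t : ℕ) : ∀ a : ℕ, ∏ i ∈ range a, ((t : ℝ) - i) = t.descFactorial a := by
  intro a
  induction a with
  | zero => simp
  | succ a ih =>
    rw [prod_range_succ, ih, Nat.descFactorial_succ, Nat.cast_mul]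
    rcases le_or_gt a t with h | h
    · rw [Nat.cast_sub h]; ring
    · rw [Nat.descFactorial_eq_zero_iff_lt.2 h]; simp

-- key arithmetic identity
lemma MP.ratio (n t a : ℕ) (ht : t ≤ n) (ha : a ≤ n) :
    ((n.choose t : ℝ))⁻¹ * ((n - a).choose (t - a) : ℝ) * (if a ≤ t then 1 else 0)
    = ((n.descFactorial a : ℝ))⁻¹ * t.descFactorial a := by
  rcases le_or_gt a t with h | h
  · simp only [h, if_pos]
    have key : (n - a).choose (t - a) * n.descFactorial a = n.choose t * t.descFactorial a := by
      rw [Nat.descFactorial_eq_factorial_mul_choose, Nat.descFactorial_eq_factorial_mul_choose]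
      have := Nat.choose_mul (n := n) h
      calc (n - a).choose (t - a) * (a.factorial * n.choose a)
          = (n.choose a * (n-a).choose (t-a)) * a.factorial := by ring
        _ = (n.choose t * t.choose a) * a.factorial := by rw [this]
        _ = n.choose t * (a.factorial * t.choose a) := by ring
    have h1 : (n.choose t : ℝ) ≠ 0 := Nat.cast_ne_zero.2 (Nat.choose_pos ht).ne'
    have h2 : (n.descFactorial a : ℝ) ≠ 0 := by
      rw [Nat.cast_ne_zero, ← Nat.pos_iff_ne_zero, Nat.descFactorial_eq_factorial_mul_choose]
      exact Nat.mul_pos a.factorial_pos (Nat.choose_pos ha)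
    field_simp
    calc ((n - a).choose (t - a) : ℝ) * n.descFactorial a
        = ((n - a).choose (t - a) * n.descFactorial a : ℕ) := by push_cast; ring
      _ = ((n.choose t * t.descFactorial a : ℕ) : ℝ) := by rw [key]
      _ = (n.choose t : ℝ) * t.descFactorial a := by push_cast; ring
  · rw [Nat.descFactorial_eq_zero_iff_lt.2 h]
    simp [not_le.2 h]

-- reindex sum over ±1 vectors of weight t to sum over subsets of size t
lemma MP.reindex (n t : ℕ) (f : (Fin n → ℝ) → ℝ) :
    ∑ x ∈ (Fintype.piFinset fun _ : Fin n => ({-1, 1} : Finset ℝ)).filter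
        (fun x => (Finset.univ.filter fun i => x i = -1).card = t), f x
    = ∑ T ∈ Finset.powersetCard t (Finset.univ : Finset (Fin n)),
        f (fun i => if i ∈ T then -1 else 1) := by
  refine Finset.sum_nbij' (fun x => Finset.univ.filter fun i => x i = -1)
    (fun T => fun i => if i ∈ T then -1 else 1) ?_ ?_ ?_ ?_ ?_
  · intro x hx
    simp only [Finset.mem_filter] at hx
    simp [Finset.mem_powersetCard, hx.2]
  · intro T hT
    simp only [Finset.mem_powersetCard] at hT
    simp only [Finset.mem_filter, Fintype.mem_piFinset, Finset.mem_insert, Finset.mem_singleton]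
    constructor
    · intro i; by_cases h : i ∈ T <;> simp [h]
    · rw [← hT.2]; congr 1
      ext i
      by_cases h : i ∈ T <;> simp [h] <;> norm_num
  · intro x hx
    simp only [Finset.mem_filter, Fintype.mem_piFinset, Finset.mem_insert,
      Finset.mem_singleton] at hx
    funext i
    rcases hx.1 i with h | h <;> simp [h] <;> norm_num
  · intro T hT
    ext i
    by_cases h : i ∈ T <;> simp [h] <;> norm_num
  · intro x hx
    simp only [Finset.mem_filter, Fintype.mem_piFinset, Finset.mem_insert,
      Finset.mem_singleton] at hx
    congr 1
    funext i
    simp only [Finset.mem_filter, Finset.mem_univ, true_and]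
    rcases hx.1 i with h | h <;> simp [h] <;> norm_num

lemma MP.count (n t : ℕ) (A : Finset (Fin n)) (hA : A.card ≤ t) :
    ((Finset.powersetCard t (Finset.univ : Finset (Fin n))).filter (fun T => A ⊆ T)).card
    = (n - A.card).choose (t - A.card) := by
  have : ((Finset.powersetCard t (Finset.univ : Finset (Fin n))).filter
      (fun T => A ⊆ T)).card
      = (Finset.powersetCard (t - A.card) ((Finset.univ : Finset (Fin n)) \ A)).card := by
    refine Finset.card_nbij' (fun T => T \ A) (fun T' => T' ∪ A) ?_ ?_ ?_ ?_
    · intro T hT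
      simp only [Finset.mem_coe, Finset.mem_filter, Finset.mem_powersetCard] at hT
      simp only [Finset.mem_coe, Finset.mem_powersetCard]
      exact ⟨Finset.sdiff_subset_sdiff hT.1.1 le_rfl,
        by rw [Finset.card_sdiff_of_subset hT.2, hT.1.2]⟩
    · intro T' hT'
      simp only [Finset.mem_coe, Finset.mem_powersetCard] at hT'
      have hdisj : Disjoint T' A := Finset.disjoint_of_subset_left hT'.1 (Finset.sdiff_disjoint)
      simp only [Finset.mem_coe, Finset.mem_filter, Finset.mem_powersetCard]
      refine ⟨⟨Finset.subset_univ _, ?_⟩, Finset.subset_union_right⟩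
      rw [Finset.card_union_of_disjoint hdisj, hT'.2]
      omega
    · intro T hT
      simp only [Finset.mem_coe, Finset.mem_filter] at hT
      exact Finset.sdiff_union_of_subset hT.2
    · intro T' hT'
      simp only [Finset.mem_coe, Finset.mem_powersetCard] at hT'
      have hdisj : Disjoint T' A := Finset.disjoint_of_subset_left hT'.1 (Finset.sdiff_disjoint)
      exact Finset.union_sdiff_cancel_right hdisj
  rw [this, Finset.card_powersetCard, Finset.card_sdiff_of_subset (Finset.subset_univ A),
    Finset.card_univ, Fintype.card_fin]

lemma MP.count_zero (n t : ℕ) (A : Finset (Fin n)) (hA : t < A.card) :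
    ((Finset.powersetCard t (Finset.univ : Finset (Fin n))).filter (fun T => A ⊆ T)).card
    = 0 := by
  rw [Finset.card_eq_zero, Finset.filter_eq_empty_iff]
  intro T hT hsub
  rw [Finset.mem_powersetCard] at hT
  exact absurd (Finset.card_le_card hsub) (by omega)

noncomputable def MP.qS (n : ℕ) (S : Finset (Fin n)) : Polynomial ℝ :=
  ∑ A ∈ S.powerset, Polynomial.C ((-2:ℝ)^A.card * (n.descFactorial A.card : ℝ)⁻¹) *
    ∏ i ∈ Finset.range A.card, (Polynomial.X - Polynomial.C (i:ℝ))

lemma MP.qS_degree (n : ℕ) (S : Finset (Fin n)) : (MP.qS n S).degree ≤ S.card := by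
  refine (Polynomial.degree_sum_le _ _).trans ?_
  rw [Finset.sup_le_iff]
  intro A hA
  rw [Finset.mem_powerset] at hA
  refine (Polynomial.degree_mul_le _ _).trans ?_
  have h1 : (Polynomial.C ((-2:ℝ)^A.card * (n.descFactorial A.card : ℝ)⁻¹)).degree ≤ 0 :=
    Polynomial.degree_C_le
  have h2 : (∏ i ∈ Finset.range A.card, (Polynomial.X - Polynomial.C (i:ℝ))).degree
      ≤ (A.card : WithBot ℕ) := by
    refine (Polynomial.degree_prod_le _ _).trans ?_
    have step : ∑ i ∈ Finset.range A.card, (Polynomial.X - Polynomial.C (i:ℝ)).degree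
        ≤ ∑ _i ∈ Finset.range A.card, (1 : WithBot ℕ) :=
      Finset.sum_le_sum fun i _ => Polynomial.degree_X_sub_C_le (i:ℝ)
    refine step.trans ?_
    rw [Finset.sum_const, Finset.card_range]
    simp [nsmul_eq_mul]
  calc (Polynomial.C ((-2:ℝ)^A.card * (n.descFactorial A.card : ℝ)⁻¹)).degree +
        (∏ i ∈ Finset.range A.card, (Polynomial.X - Polynomial.C (i:ℝ))).degree
      ≤ 0 + (A.card : WithBot ℕ) := add_le_add h1 h2
    _ = (A.card : WithBot ℕ) := zero_add _
    _ ≤ (S.card : WithBot ℕ) := by exact_mod_cast Finset.card_le_card hA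

lemma MP.prod_ite (n : ℕ) (A T : Finset (Fin n)) :
    ∏ i ∈ A, (if i ∈ T then (-2:ℝ) else 0) = if A ⊆ T then (-2:ℝ)^A.card else 0 := by
  by_cases h : A ⊆ T
  · rw [if_pos h, Finset.prod_congr rfl (fun i hi => if_pos (h hi)), Finset.prod_const]
  · obtain ⟨i, hi, hiT⟩ := Finset.not_subset.1 h
    rw [if_neg h]
    exact Finset.prod_eq_zero hi (if_neg hiT)

lemma MP.qS_eval (n : ℕ) (S : Finset (Fin n)) (t : ℕ) (ht : t ≤ n) :
    (MP.qS n S).eval (t : ℝ) = ((n.choose t : ℝ))⁻¹ *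
      ∑ x ∈ (Fintype.piFinset fun _ : Fin n => ({-1, 1} : Finset ℝ)).filter
          (fun x => (Finset.univ.filter fun i => x i = -1).card = t),
        ∏ i ∈ S, x i := by
  rw [MP.reindex n t (fun x => ∏ i ∈ S, x i)]
  have expand : ∀ T ∈ Finset.powersetCard t (Finset.univ : Finset (Fin n)),
      (fun x => ∏ i ∈ S, x i) (fun i => if i ∈ T then (-1:ℝ) else 1)
      = ∑ A ∈ S.powerset, (if A ⊆ T then (-2:ℝ)^A.card else 0) := by
    intro T _
    simp only
    have : ∀ i ∈ S, (if i ∈ T then (-1:ℝ) else 1)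
        = (if i ∈ T then (-2:ℝ) else 0) + 1 := by
      intro i _; by_cases h : i ∈ T <;> simp [h] <;> norm_num
    rw [Finset.prod_congr rfl this, Finset.prod_add]
    refine Finset.sum_congr rfl fun A _ => ?_
    rw [Finset.prod_const_one, mul_one, MP.prod_ite]
  rw [Finset.sum_congr rfl expand, Finset.sum_comm]
  have inner : ∀ A ∈ S.powerset,
      ∑ T ∈ Finset.powersetCard t (Finset.univ : Finset (Fin n)),
        (if A ⊆ T then (-2:ℝ)^A.card else 0)
      = (((Finset.powersetCard t (Finset.univ : Finset (Fin n))).filter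
          (fun T => A ⊆ T)).card : ℝ) * (-2:ℝ)^A.card := by
    intro A _
    rw [← Finset.sum_filter, Finset.sum_const, nsmul_eq_mul]
  rw [Finset.sum_congr rfl inner, Finset.mul_sum]
  unfold MP.qS
  rw [Polynomial.eval_finset_sum]
  refine Finset.sum_congr rfl fun A hA => ?_
  rw [Finset.mem_powerset] at hA
  have haN : A.card ≤ n := (Finset.card_le_card hA).trans (by
    calc S.card ≤ (Finset.univ : Finset (Fin n)).card := Finset.card_le_card (Finset.subset_univ _)
      _ = n := by rw [Finset.card_univ, Fintype.card_fin])
  rw [Polynomial.eval_mul, Polynomial.eval_C, Polynomial.eval_prod]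
  simp only [Polynomial.eval_sub, Polynomial.eval_X, Polynomial.eval_C]
  rw [MP.cast_descFact]
  rcases le_or_gt A.card t with h | h
  · rw [MP.count n t A h]
    have := MP.ratio n t A.card ht haN
    rw [if_pos h, mul_one] at this
    rw [mul_assoc, ← this]; ring
  · rw [MP.count_zero n t A h, Nat.descFactorial_eq_zero_iff_lt.2 h]
    simp

lemma MP.pow_eq (x : ℝ) (hx : x = -1 ∨ x = 1) (k : ℕ) :
    x ^ k = if Odd k then x else 1 := by
  rcases hx with h | h
  · subst h
    rcases Nat.even_or_odd k with hk | hk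
    · rw [hk.neg_one_pow, if_neg (Nat.not_odd_iff_even.2 hk)]
    · rw [hk.neg_one_pow, if_pos hk]
  · subst h; simp

theorem minsky_papert_symmetrization (n : ℕ) (p : MvPolynomial (Fin n) ℝ) :
    ∃ q : Polynomial ℝ, q.degree ≤ p.totalDegree ∧
      ∀ t : ℕ, t ≤ n →
        q.eval (t : ℝ) = ((n.choose t : ℝ))⁻¹ *
          ∑ x ∈ (Fintype.piFinset fun _ : Fin n => ({-1, 1} : Finset ℝ)).filter
              (fun x => (Finset.univ.filter fun i => x i = -1).card = t),
            MvPolynomial.eval x p := by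
  classical
  set Sd : (Fin n →₀ ℕ) → Finset (Fin n) :=
    fun d => Finset.univ.filter (fun i => Odd (d i)) with hSd
  have card_le : ∀ d ∈ p.support, (Sd d).card ≤ p.totalDegree := by
    intro d hd
    have h1 : (Sd d).card ≤ ∑ i ∈ Sd d, d i := by
      rw [Finset.card_eq_sum_ones]
      refine Finset.sum_le_sum fun i hi => ?_
      rw [hSd, Finset.mem_filter] at hi
      exact hi.2.pos
    have hsub : Sd d ⊆ d.support := by
      intro i hi
      rw [hSd, Finset.mem_filter] at hi
      rw [Finsupp.mem_support_iff]
      exact hi.2.pos.ne'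
    have h2 : ∑ i ∈ Sd d, d i ≤ ∑ i ∈ d.support, d i :=
      Finset.sum_le_sum_of_subset hsub
    have h3 : ∑ i ∈ d.support, d i ≤ p.totalDegree := MvPolynomial.le_totalDegree hd
    omega
  refine ⟨∑ d ∈ p.support, Polynomial.C (p.coeff d) * MP.qS n (Sd d), ?_, ?_⟩
  · refine (Polynomial.degree_sum_le _ _).trans ?_
    rw [Finset.sup_le_iff]
    intro d hd
    refine (Polynomial.degree_mul_le _ _).trans ?_
    have := MP.qS_degree n (Sd d)
    calc (Polynomial.C (p.coeff d)).degree + (MP.qS n (Sd d)).degree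
        ≤ 0 + ((Sd d).card : WithBot ℕ) := add_le_add Polynomial.degree_C_le this
      _ = ((Sd d).card : WithBot ℕ) := zero_add _
      _ ≤ (p.totalDegree : WithBot ℕ) := by exact_mod_cast card_le d hd
  · intro t ht
    rw [Polynomial.eval_finset_sum]
    simp only [Polynomial.eval_mul, Polynomial.eval_C]
    have step1 : ∀ d ∈ p.support, p.coeff d * (MP.qS n (Sd d)).eval (t:ℝ)
        = ((n.choose t : ℝ))⁻¹ *
          ∑ x ∈ (Fintype.piFinset fun _ : Fin n => ({-1, 1} : Finset ℝ)).filter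
              (fun x => (Finset.univ.filter fun i => x i = -1).card = t),
            p.coeff d * ∏ i ∈ Sd d, x i := by
      intro d _
      rw [MP.qS_eval n (Sd d) t ht, Finset.mul_sum, Finset.mul_sum, Finset.mul_sum]
      exact Finset.sum_congr rfl fun x _ => by ring
    rw [Finset.sum_congr rfl step1, ← Finset.mul_sum, Finset.sum_comm]
    congr 1
    refine Finset.sum_congr rfl fun x hx => ?_
    rw [Finset.mem_filter, Fintype.mem_piFinset] at hx
    have hpm : ∀ i, x i = -1 ∨ x i = 1 := by
      intro i
      have := hx.1 i
      simpa using this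
    rw [MvPolynomial.eval_eq']
    refine Finset.sum_congr rfl fun d _ => ?_
    congr 1
    have : ∀ i ∈ (Finset.univ : Finset (Fin n)), x i ^ d i
        = if Odd (d i) then x i else 1 :=
      fun i _ => MP.pow_eq (x i) (hpm i) (d i)
    rw [Finset.prod_congr rfl this, ← Finset.prod_filter]
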